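/- Under the LATE assumptions and EMCO, the average untreated potential outcome for compliers is identified: (E[Y·1(D=0)|Z=1]−E[Y·1(D=0)|Z=0])/(P(D=0|Z=1)−P(D=0|Z=0)) = E[Y(0) | D(1)>D(0)=0], provided P(D(1)>D(0)=0) > 0. -/

import Mathlib

open MeasureTheory ProbabilityTheory

variable {Ω : Type*}

/-- probability of a set -/
noncomputable def pr [MeasurableSpace Ω] (μ : MeasureTheory.Measure Ω) (A : Set Ω) : ℝ :=
  (μ A).toReal

/-- conditional probability P(A | B) -/
noncomputable def cP [MeasurableSpace Ω] (μ : MeasureTheory.Measure Ω) (A B : Set Ω) : ℝ :=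
  pr μ (A ∩ B) / pr μ B

/-- conditional expectation E[f | B] -/
noncomputable def cE [MeasurableSpace Ω] (μ : MeasureTheory.Measure Ω) (f : Ω → ℝ) (B : Set Ω) : ℝ :=
  (∫ ω in B, f ω ∂μ) / pr μ B

/-- observed treatment D = Z·D(1) + (1−Z)·D(0) -/
def obsD (Z D0 D1 : Ω → ℕ) : Ω → ℕ := fun ω => if Z ω = 1 then D1 ω else D0 ω

/-- observed outcome Y = Y(D) -/
noncomputable def obsY (Z D0 D1 : Ω → ℕ) (Yp : ℕ → Ω → ℝ) : Ω → ℝ :=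
  fun ω => Yp (obsD Z D0 D1 ω) ω

/-- identification of compliers' average untreated potential outcome. -/
theorem complier_untreated_mean_identified
    [MeasurableSpace Ω] (μ : MeasureTheory.Measure Ω) [IsProbabilityMeasure μ]
    (Dbar : ℕ) (Z D0 D1 : Ω → ℕ) (Yp : ℕ → Ω → ℝ)
    (hZ01 : ∀ ω, Z ω = 0 ∨ Z ω = 1)
    (hZm : Measurable Z) (hD0m : Measurable D0) (hD1m : Measurable D1)
    (hD0b : ∀ ω, D0 ω ≤ Dbar) (hD1b : ∀ ω, D1 ω ≤ Dbar)
    (hYm : ∀ d, Measurable (Yp d)) (hYint : ∀ d, Integrable (Yp d) μ)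
    (hindep : IndepFun (fun ω => (D0 ω, D1 ω, fun d => Yp d ω)) Z μ)
    (hmono : ∀ᵐ ω ∂μ, D0 ω ≤ D1 ω)
    (hemco : ∀ᵐ ω ∂μ, D0 ω < D1 ω → D0 ω = 0)
    (hZ1pos : 0 < pr μ {ω | Z ω = 1}) (hZ1lt : pr μ {ω | Z ω = 1} < 1)
    (hcomp : 0 < pr μ {ω | D0 ω = 0 ∧ 0 < D1 ω}) :
    (cE μ (fun ω => if obsD Z D0 D1 ω = 0 then obsY Z D0 D1 Yp ω else 0) {ω | Z ω = 1} -
      cE μ (fun ω => if obsD Z D0 D1 ω = 0 then obsY Z D0 D1 Yp ω else 0) {ω | Z ω = 0}) /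
      (cP μ {ω | obsD Z D0 D1 ω = 0} {ω | Z ω = 1} -
        cP μ {ω | obsD Z D0 D1 ω = 0} {ω | Z ω = 0}) =
    cE μ (Yp 0) {ω | D0 ω = 0 ∧ 0 < D1 ω} := by
  classical
  -- basic sets
  set S1 : Set Ω := {ω | Z ω = 1} with hS1def
  set S0 : Set Ω := {ω | Z ω = 0} with hS0def
  set C : Set Ω := {ω | D0 ω = 0 ∧ 0 < D1 ω} with hCdef
  have hS1m : MeasurableSet S1 := hZm (measurableSet_singleton 1)
  have hS0m : MeasurableSet S0 := hZm (measurableSet_singleton 0)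
  have hCm : MeasurableSet C := by
    have : C = {ω | D0 ω = 0} ∩ {ω | 0 < D1 ω} := rfl
    rw [this]
    exact (hD0m (measurableSet_singleton 0)).inter (measurableSet_lt measurable_const hD1m)
  have hq1 : pr μ S1 ≠ 0 := ne_of_gt hZ1pos
  -- S0 is the complement of S1
  have hS0c : S0 = S1ᶜ := by
    ext ω
    rcases hZ01 ω with h | h <;> simp [hS0def, hS1def, h]
  have hq0' : pr μ S0 = 1 - pr μ S1 := by
    unfold pr
    rw [hS0c, measure_compl hS1m (measure_ne_top μ S1), measure_univ,
      ENNReal.toReal_sub_of_le prob_le_one (by simp)]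
    simp
  have hq0pos : 0 < pr μ S0 := by rw [hq0']; linarith
  have hq0 : pr μ S0 ≠ 0 := ne_of_gt hq0pos
  -- the joint random variable
  set W : Ω → ℕ × ℕ × (ℕ → ℝ) := fun ω => (D0 ω, D1 ω, fun d => Yp d ω) with hWdef
  -- key lemma: independence of functions of W from events {Z = z}
  have key : ∀ (g : ℕ × ℕ × (ℕ → ℝ) → ℝ), Measurable g →
      Integrable (fun ω => g (W ω)) μ → ∀ z : ℕ,
      ∫ ω in {ω | Z ω = z}, g (W ω) ∂μ = (∫ ω, g (W ω) ∂μ) * pr μ {ω | Z ω = z} := by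
    intro g hg hgint z
    set χ : Ω → ℝ := fun ω => if Z ω = z then (1 : ℝ) else 0 with hχdef
    have hχeq : χ = Set.indicator {ω | Z ω = z} (fun _ => (1 : ℝ)) := by
      funext ω; simp [hχdef, Set.indicator_apply]
    have hZzm : MeasurableSet {ω | Z ω = z} := hZm (measurableSet_singleton z)
    have hχint : Integrable χ μ := by
      rw [hχeq]; exact (integrable_const (1 : ℝ)).indicator hZzm
    have hIndep : IndepFun (fun ω => g (W ω)) χ μ := by
      have : χ = (fun n : ℕ => if n = z then (1 : ℝ) else 0) ∘ Z := rfl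
      rw [this]
      exact hindep.comp hg measurable_from_top
    have hmul := hIndep.integral_mul_eq_mul_integral hgint.aestronglyMeasurable hχint.aestronglyMeasurable
    have hprod : (fun ω => g (W ω)) * χ = Set.indicator {ω | Z ω = z} (fun ω => g (W ω)) := by
      funext ω
      by_cases hz : Z ω = z <;> simp [hχdef, Set.indicator_apply, hz, Set.mem_setOf_eq]
    have hχint' : ∫ ω, χ ω ∂μ = pr μ {ω | Z ω = z} := by
      rw [hχeq, integral_indicator_const (1 : ℝ) hZzm]
      simp [pr, Measure.real]
    calc ∫ ω in {ω | Z ω = z}, g (W ω) ∂μ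
        = ∫ ω, Set.indicator {ω | Z ω = z} (fun ω => g (W ω)) ω ∂μ :=
          (integral_indicator hZzm).symm
      _ = ∫ ω, ((fun ω => g (W ω)) * χ) ω ∂μ := by rw [hprod]
      _ = (∫ ω, g (W ω) ∂μ) * ∫ ω, χ ω ∂μ := hmul
      _ = (∫ ω, g (W ω) ∂μ) * pr μ {ω | Z ω = z} := by rw [hχint']
  -- the two relevant functions of W
  set g1 : ℕ × ℕ × (ℕ → ℝ) → ℝ := fun p => if p.2.1 = 0 then p.2.2 0 else 0 with hg1def
  set g0 : ℕ × ℕ × (ℕ → ℝ) → ℝ := fun p => if p.1 = 0 then p.2.2 0 else 0 with hg0def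
  have hg1m : Measurable g1 := by
    apply Measurable.ite ((measurable_fst.comp measurable_snd) (measurableSet_singleton 0))
    · exact (measurable_pi_apply 0).comp (measurable_snd.comp measurable_snd)
    · exact measurable_const
  have hg0m : Measurable g0 := by
    apply Measurable.ite (measurable_fst (measurableSet_singleton 0))
    · exact (measurable_pi_apply 0).comp (measurable_snd.comp measurable_snd)
    · exact measurable_const
  have h1eq : (fun ω => g1 (W ω)) = fun ω => if D1 ω = 0 then Yp 0 ω else 0 := rfl
  have h0eq : (fun ω => g0 (W ω)) = fun ω => if D0 ω = 0 then Yp 0 ω else 0 := rfl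
  have h1ind : (fun ω => g1 (W ω)) = Set.indicator {ω | D1 ω = 0} (Yp 0) := by
    funext ω
    show (if D1 ω = 0 then Yp 0 ω else 0) = _
    by_cases hd : D1 ω = 0 <;> simp [Set.indicator_apply, Set.mem_setOf_eq, hd]
  have h0ind : (fun ω => g0 (W ω)) = Set.indicator {ω | D0 ω = 0} (Yp 0) := by
    funext ω
    show (if D0 ω = 0 then Yp 0 ω else 0) = _
    by_cases hd : D0 ω = 0 <;> simp [Set.indicator_apply, Set.mem_setOf_eq, hd]
  have hD1zm : MeasurableSet {ω | D1 ω = 0} := hD1m (measurableSet_singleton 0)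
  have hD0zm : MeasurableSet {ω | D0 ω = 0} := hD0m (measurableSet_singleton 0)
  have h1int : Integrable (fun ω => g1 (W ω)) μ := by
    rw [h1ind]; exact (hYint 0).indicator hD1zm
  have h0int : Integrable (fun ω => g0 (W ω)) μ := by
    rw [h0ind]; exact (hYint 0).indicator hD0zm
  -- the observed integrand coincides with g1∘W on S1 and g0∘W on S0
  set f : Ω → ℝ := fun ω => if obsD Z D0 D1 ω = 0 then obsY Z D0 D1 Yp ω else 0 with hfdef
  have hfS1 : Set.EqOn f (fun ω => g1 (W ω)) S1 := by
    intro ω hω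
    have hz : Z ω = 1 := hω
    show (if obsD Z D0 D1 ω = 0 then obsY Z D0 D1 Yp ω else 0) =
      if D1 ω = 0 then Yp 0 ω else 0
    by_cases hd : D1 ω = 0 <;> simp [obsD, obsY, hz, hd]
  have hfS0 : Set.EqOn f (fun ω => g0 (W ω)) S0 := by
    intro ω hω
    have hz : Z ω = 0 := hω
    have hz1 : Z ω ≠ 1 := by omega
    show (if obsD Z D0 D1 ω = 0 then obsY Z D0 D1 Yp ω else 0) =
      if D0 ω = 0 then Yp 0 ω else 0
    by_cases hd : D0 ω = 0 <;> simp [obsD, obsY, hz1, hd]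
  -- compute the conditional expectations
  have hcE1 : cE μ f S1 = ∫ ω, g1 (W ω) ∂μ := by
    unfold cE
    rw [setIntegral_congr_fun hS1m hfS1, hS1def, key g1 hg1m h1int 1,
      mul_div_assoc, div_self hq1, mul_one]
  have hcE0 : cE μ f S0 = ∫ ω, g0 (W ω) ∂μ := by
    unfold cE
    rw [setIntegral_congr_fun hS0m hfS0, hS0def, key g0 hg0m h0int 0,
      mul_div_assoc, div_self hq0, mul_one]
  -- compute the conditional probabilities
  set A : Set Ω := {ω | obsD Z D0 D1 ω = 0} with hAdef
  have hAS1 : A ∩ S1 = {ω | D1 ω = 0} ∩ S1 := by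
    ext ω
    by_cases hz : Z ω = 1 <;>
      simp [hAdef, hS1def, obsD, hz, Set.mem_setOf_eq]
  have hAS0 : A ∩ S0 = {ω | D0 ω = 0} ∩ S0 := by
    ext ω
    by_cases hz : Z ω = 0 <;>
      [skip; skip] <;>
      · have hz1 : Z ω = 1 ∨ Z ω = 0 := (hZ01 ω).symm
        by_cases h1 : Z ω = 1 <;> simp [hAdef, hS0def, obsD, hz, h1, Set.mem_setOf_eq]
  have hindD1 : IndepFun D1 Z μ :=
    hindep.comp (measurable_fst.comp measurable_snd) measurable_id
  have hindD0 : IndepFun D0 Z μ := hindep.comp measurable_fst measurable_id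
  have hcP1 : cP μ A S1 = pr μ {ω | D1 ω = 0} := by
    unfold cP
    rw [hAS1]
    have heq : μ ({ω | D1 ω = 0} ∩ S1) = μ {ω | D1 ω = 0} * μ S1 :=
      hindD1.measure_inter_preimage_eq_mul {0} {1}
        (measurableSet_singleton 0) (measurableSet_singleton 1)
    have heqr : pr μ ({ω | D1 ω = 0} ∩ S1) = pr μ {ω | D1 ω = 0} * pr μ S1 := by
      unfold pr; rw [heq, ENNReal.toReal_mul]
    rw [heqr, mul_div_assoc, div_self hq1, mul_one]
  have hcP0 : cP μ A S0 = pr μ {ω | D0 ω = 0} := by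
    unfold cP
    rw [hAS0]
    have heq : μ ({ω | D0 ω = 0} ∩ S0) = μ {ω | D0 ω = 0} * μ S0 :=
      hindD0.measure_inter_preimage_eq_mul {0} {0}
        (measurableSet_singleton 0) (measurableSet_singleton 0)
    have heqr : pr μ ({ω | D0 ω = 0} ∩ S0) = pr μ {ω | D0 ω = 0} * pr μ S0 := by
      unfold pr; rw [heq, ENNReal.toReal_mul]
    rw [heqr, mul_div_assoc, div_self hq0, mul_one]
  -- numerator: I1 - I0 = -∫_C Yp 0
  have hdiff : (fun ω => g1 (W ω) - g0 (W ω)) =ᵐ[μ] fun ω => -(Set.indicator C (Yp 0) ω) := by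
    filter_upwards [hmono] with ω hle
    show (if D1 ω = 0 then Yp 0 ω else 0) - (if D0 ω = 0 then Yp 0 ω else 0) =
      -(Set.indicator C (Yp 0) ω)
    by_cases hd1 : D1 ω = 0
    · have hd0 : D0 ω = 0 := by omega
      have hC : ω ∉ C := fun h => by have : 0 < D1 ω := h.2; omega
      simp [hd1, hd0, Set.indicator_apply, hC]
    · by_cases hd0 : D0 ω = 0
      · have hC : ω ∈ C := ⟨hd0, Nat.pos_of_ne_zero hd1⟩
        simp [hd1, hd0, Set.indicator_apply, hC]
      · have hC : ω ∉ C := fun h => hd0 h.1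
        simp [hd1, hd0, Set.indicator_apply, hC]
  have hnum : (∫ ω, g1 (W ω) ∂μ) - (∫ ω, g0 (W ω) ∂μ) = -(∫ ω in C, Yp 0 ω ∂μ) := by
    rw [← integral_sub h1int h0int, integral_congr_ae hdiff, integral_neg,
      integral_indicator hCm]
  -- denominator: p1 - p0 = -pr C
  have hsetae : {ω | D1 ω = 0} =ᵐ[μ] {ω | D0 ω = 0 ∧ D1 ω = 0} := by
    rw [Filter.eventuallyEq_set]
    filter_upwards [hmono] with ω hle
    show D1 ω = 0 ↔ D0 ω = 0 ∧ D1 ω = 0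
    omega
  have hunion : {ω | D0 ω = 0} = {ω | D0 ω = 0 ∧ D1 ω = 0} ∪ C := by
    ext ω; simp only [Set.mem_setOf_eq, Set.mem_union, hCdef]; omega
  have hdisj : Disjoint {ω | D0 ω = 0 ∧ D1 ω = 0} C := by
    rw [Set.disjoint_left]
    intro ω h1 h2
    simp only [Set.mem_setOf_eq, hCdef] at h1 h2
    omega
  have hden : pr μ {ω | D1 ω = 0} - pr μ {ω | D0 ω = 0} = -(pr μ C) := by
    unfold pr
    have e1 : μ {ω | D1 ω = 0} = μ {ω | D0 ω = 0 ∧ D1 ω = 0} := measure_congr hsetae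
    have hbm : MeasurableSet {ω | D0 ω = 0 ∧ D1 ω = 0} := by
      have : {ω | D0 ω = 0 ∧ D1 ω = 0} = {ω | D0 ω = 0} ∩ {ω | D1 ω = 0} := rfl
      rw [this]; exact hD0zm.inter hD1zm
    have e2 : μ {ω | D0 ω = 0} = μ {ω | D0 ω = 0 ∧ D1 ω = 0} + μ C := by
      rw [hunion, measure_union hdisj hCm]
    rw [e1, e2, ENNReal.toReal_add (measure_ne_top μ _) (measure_ne_top μ _)]
    ring
  -- put everything together
  rw [hcE1, hcE0, hcP1, hcP0, hnum, hden, neg_div_neg_eq]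
  unfold cE
  rfl
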